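/- Let n ≥ 3, let λ_1, ..., λ_n be real numbers summing to zero, and let σ_{ij} (for i ≠ j) be nonnegative real numbers with σ_{ij} = σ_{ji}. Set R = ∑_{i≠j} σ_{ij}. Then ∑_{i≠j} λ_i λ_j σ_{ij} - ((n-2)/(2n))·R·∑_k λ_k² ≤ -((n-1)/n)·∑_{i<j} (λ_i - λ_j)²·σ_{ij} ≤ 0. -/

import Mathlib

open Finset

private lemma split_ne_sum {n : ℕ} (i : Fin n) (f : Fin n → ℝ) :
    ∑ j ∈ univ.filter (· ≠ i), f j
      = (∑ j ∈ univ.filter (fun j => i < j), f j)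
        + ∑ j ∈ univ.filter (fun j => j < i), f j := by
  rw [sum_filter, sum_filter, sum_filter, ← sum_add_distrib]
  refine sum_congr rfl fun j _ => ?_
  rcases lt_trichotomy i j with h | h | h
  · simp [h, h.ne', not_lt_of_gt h]
  · simp [h]
  · simp [h, h.ne, not_lt_of_gt h]

private lemma swap_sum {n : ℕ} (g : Fin n → Fin n → ℝ) (hg : ∀ i j, g i j = g j i) :
    ∑ i, ∑ j ∈ univ.filter (fun j => j < i), g i j
      = ∑ i, ∑ j ∈ univ.filter (fun j => i < j), g i j := by
  rw [Finset.sum_comm' (t' := (univ : Finset (Fin n)))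
      (s' := fun y => univ.filter (fun x => y < x)) (by simp)]
  exact sum_congr rfl fun i _ => sum_congr rfl fun j _ => hg j i

private lemma sym_sum {n : ℕ} (g : Fin n → Fin n → ℝ) (hg : ∀ i j, g i j = g j i) :
    ∑ i, ∑ j ∈ univ.filter (· ≠ i), g i j
      = 2 * ∑ i, ∑ j ∈ univ.filter (fun j => i < j), g i j := by
  have h := swap_sum g hg
  calc ∑ i, ∑ j ∈ univ.filter (· ≠ i), g i j
      = ∑ i, ((∑ j ∈ univ.filter (fun j => i < j), g i j)
          + ∑ j ∈ univ.filter (fun j => j < i), g i j) :=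
        sum_congr rfl fun i _ => split_ne_sum i (g i)
    _ = (∑ i, ∑ j ∈ univ.filter (fun j => i < j), g i j)
          + ∑ i, ∑ j ∈ univ.filter (fun j => j < i), g i j := sum_add_distrib
    _ = 2 * ∑ i, ∑ j ∈ univ.filter (fun j => i < j), g i j := by rw [h]; ring

private lemma scalar_key {n : ℕ} (hn : 3 ≤ n) (lam : Fin n → ℝ)
    (hsum : ∑ k, lam k = 0) {i j : Fin n} (hij : i ≠ j) :
    ((n : ℝ) - 1) * ((lam i) ^ 2 + (lam j) ^ 2) + 2 * lam i * lam j
      ≤ ((n : ℝ) - 2) * ∑ k, (lam k) ^ 2 := by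
  have hsub : ({i, j} : Finset (Fin n)) ⊆ univ := subset_univ _
  have hcard : (#(univ \ ({i, j} : Finset (Fin n))) : ℝ) = (n : ℝ) - 2 := by
    rw [card_sdiff_of_subset hsub, card_pair hij, card_univ, Fintype.card_fin]
    have : 2 ≤ n := by omega
    push_cast [Nat.cast_sub this]
    ring
  have h1 : (∑ k ∈ univ \ ({i, j} : Finset (Fin n)), lam k) = -(lam i + lam j) := by
    have := Finset.sum_sdiff (f := lam) hsub
    rw [sum_pair hij] at this
    linarith [hsum, this]
  have h2 : (∑ k ∈ univ \ ({i, j} : Finset (Fin n)), (lam k) ^ 2)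
      = (∑ k, (lam k) ^ 2) - ((lam i) ^ 2 + (lam j) ^ 2) := by
    have := Finset.sum_sdiff (f := fun k => (lam k) ^ 2) hsub
    rw [sum_pair hij] at this
    linarith [this]
  have hcs := sq_sum_le_card_mul_sum_sq (s := univ \ ({i, j} : Finset (Fin n))) (f := lam)
  rw [h1] at hcs
  have hcs' : (lam i + lam j) ^ 2
      ≤ ((n : ℝ) - 2) * ((∑ k, (lam k) ^ 2) - ((lam i) ^ 2 + (lam j) ^ 2)) := by
    calc (lam i + lam j) ^ 2 = (-(lam i + lam j)) ^ 2 := by ring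
      _ ≤ (#(univ \ ({i, j} : Finset (Fin n))) : ℝ)
            * ∑ k ∈ univ \ ({i, j} : Finset (Fin n)), (lam k) ^ 2 := by
          exact_mod_cast hcs
      _ = ((n : ℝ) - 2) * ((∑ k, (lam k) ^ 2) - ((lam i) ^ 2 + (lam j) ^ 2)) := by
          rw [hcard, h2]
  nlinarith [hcs']

theorem sectional_nonneg_estimate (n : ℕ) (hn : 3 ≤ n) (lam : Fin n → ℝ)
    (σ : Fin n → Fin n → ℝ)
    (hsum : ∑ k, lam k = 0)
    (hsymm : ∀ i j, σ i j = σ j i)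
    (hnonneg : ∀ i j, i ≠ j → 0 ≤ σ i j)
    (R : ℝ) (hR : R = ∑ i, ∑ j ∈ univ.filter (· ≠ i), σ i j) :
    ((∑ i, ∑ j ∈ univ.filter (· ≠ i), lam i * lam j * σ i j)
        - ((n : ℝ) - 2) / (2 * n) * R * ∑ k, (lam k) ^ 2
      ≤ -(((n : ℝ) - 1) / n) * ∑ i, ∑ j ∈ univ.filter (fun j => i < j), (lam i - lam j) ^ 2 * σ i j)
    ∧ -(((n : ℝ) - 1) / n) * ∑ i, ∑ j ∈ univ.filter (fun j => i < j), (lam i - lam j) ^ 2 * σ i j ≤ 0 := by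
  have hn3 : (3 : ℝ) ≤ (n : ℝ) := by exact_mod_cast hn
  have hn0 : (0 : ℝ) < n := by linarith
  set Q := ∑ k, (lam k) ^ 2 with hQ
  set A := ∑ i, ∑ j ∈ univ.filter (fun j => i < j), σ i j with hA
  set P := ∑ i, ∑ j ∈ univ.filter (fun j => i < j), lam i * lam j * σ i j with hP
  set T := ∑ i, ∑ j ∈ univ.filter (fun j => i < j), (lam i - lam j) ^ 2 * σ i j with hT
  have hT0 : 0 ≤ T := by
    refine sum_nonneg fun i _ => sum_nonneg fun j hj => ?_
    have hij : i < j := by simpa using hj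
    exact mul_nonneg (sq_nonneg _) (hnonneg i j hij.ne)
  have hRA : R = 2 * A := by
    rw [hR]; exact sym_sum σ hsymm
  have hS : (∑ i, ∑ j ∈ univ.filter (· ≠ i), lam i * lam j * σ i j) = 2 * P := by
    exact sym_sum (fun i j => lam i * lam j * σ i j)
      (fun i j => by rw [hsymm]; ring)
  -- key summed inequality
  have key : 2 * (n : ℝ) * P + ((n : ℝ) - 1) * T ≤ ((n : ℝ) - 2) * Q * A := by
    have lhs_eq : 2 * (n : ℝ) * P + ((n : ℝ) - 1) * T
        = ∑ i, ∑ j ∈ univ.filter (fun j => i < j),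
            (2 * (n : ℝ) * (lam i * lam j) + ((n : ℝ) - 1) * (lam i - lam j) ^ 2) * σ i j := by
      rw [hP, hT, mul_sum, mul_sum, ← sum_add_distrib]
      refine sum_congr rfl fun i _ => ?_
      rw [mul_sum, mul_sum, ← sum_add_distrib]
      exact sum_congr rfl fun j _ => by ring
    have rhs_eq : ((n : ℝ) - 2) * Q * A
        = ∑ i, ∑ j ∈ univ.filter (fun j => i < j), (((n : ℝ) - 2) * Q) * σ i j := by
      rw [hA, mul_sum]
      exact sum_congr rfl fun i _ => by rw [mul_sum]
    rw [lhs_eq, rhs_eq]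
    refine sum_le_sum fun i _ => sum_le_sum fun j hj => ?_
    have hij : i < j := by simpa using hj
    refine mul_le_mul_of_nonneg_right ?_ (hnonneg i j hij.ne)
    have := scalar_key hn lam hsum hij.ne
    nlinarith [this]
  constructor
  · rw [hS, hRA]
    rw [← mul_le_mul_iff_right₀ hn0]
    have h1 : (n : ℝ) * (2 * P - ((n : ℝ) - 2) / (2 * (n : ℝ)) * (2 * A) * Q)
        = 2 * (n : ℝ) * P - ((n : ℝ) - 2) * A * Q := by
      field_simp
    have h2 : (n : ℝ) * (-(((n : ℝ) - 1) / (n : ℝ)) * T) = -(((n : ℝ) - 1) * T) := by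
      field_simp
    rw [h1, h2]
    nlinarith [key]
  · have : 0 ≤ (((n : ℝ) - 1) / n) * T :=
      mul_nonneg (div_nonneg (by linarith) (le_of_lt hn0)) hT0
    linarith
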